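/- Let P₀ = [[2,0,0,-1,-1,0],[1,1,0,-1,-1,0],[1,0,1,-1,-1,0],[1,0,0,0,-1,0],[1,0,0,-1,0,0],[0,0,0,0,0,0]], P₁ = [[1,1,0,-1,0,-1],[0,2,0,-1,0,-1],[0,1,1,-1,0,-1],[0,1,0,0,0,-1],[0,0,0,0,0,0],[0,1,0,-1,0,0]], P₂ = [[1,0,1,0,-1,-1],[0,1,1,0,-1,-1],[0,0,2,0,-1,-1],[0,0,0,0,0,0],[0,0,1,0,0,-1],[0,0,1,0,-1,0]] be 6×6 integer matrices with rows and columns indexed by 0, …, 5, and extend the indexing cyclically by P_n := P_j for n ≡ j (mod 3). Define v⁽⁰⁾ = (1,0,0,0,0,0)ᵗ ∈ ℤ⁶ and v⁽ⁱ⁺¹⁾ = P_i·v⁽ⁱ⁾ for i ≥ 0. Then for every i ≥ 0, each of the coordinates v⁽ⁱ⁾₀, v⁽ⁱ⁾₁, v⁽ⁱ⁾₂ is greater than or equal to each of the coordinates v⁽ⁱ⁾₃, v⁽ⁱ⁾₄, v⁽ⁱ⁾₅. -/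

import Mathlib

def P0 : Matrix (Fin 6) (Fin 6) ℤ :=
  !![2, 0, 0, -1, -1, 0;
     1, 1, 0, -1, -1, 0;
     1, 0, 1, -1, -1, 0;
     1, 0, 0,  0, -1, 0;
     1, 0, 0, -1,  0, 0;
     0, 0, 0,  0,  0, 0]

def P1 : Matrix (Fin 6) (Fin 6) ℤ :=
  !![1, 1, 0, -1, 0, -1;
     0, 2, 0, -1, 0, -1;
     0, 1, 1, -1, 0, -1;
     0, 1, 0,  0, 0, -1;
     0, 0, 0,  0, 0,  0;
     0, 1, 0, -1, 0,  0]

def P2 : Matrix (Fin 6) (Fin 6) ℤ :=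
  !![1, 0, 1, 0, -1, -1;
     0, 1, 1, 0, -1, -1;
     0, 0, 2, 0, -1, -1;
     0, 0, 0, 0,  0,  0;
     0, 0, 1, 0,  0, -1;
     0, 0, 1, 0, -1,  0]

/-- Cyclic extension `P_n := P_{n mod 3}` of the three transition matrices. -/
def Pseq (n : ℕ) : Matrix (Fin 6) (Fin 6) ℤ := ![P0, P1, P2] (⟨n % 3, Nat.mod_lt _ (by norm_num)⟩ : Fin 3)

lemma cons_val_five' {α : Type*} {m : ℕ} (x : α) (u : Fin (m+5) → α) :
    Matrix.vecCons x u 5 =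
      Matrix.vecHead (Matrix.vecTail (Matrix.vecTail (Matrix.vecTail (Matrix.vecTail u)))) :=
  rfl

def I0 (w : Fin 6 → ℤ) : Prop :=
  w 1 = w 0 - 1 ∧ w 2 = w 0 - 1 ∧ w 3 = 0 ∧ 0 ≤ w 4 ∧ 0 ≤ w 5 ∧ w 4 + w 5 = w 0 - 1

def I1 (w : Fin 6 → ℤ) : Prop :=
  w 1 = w 0 - 1 ∧ w 2 = w 0 - 1 ∧ w 5 = 0 ∧ 1 ≤ w 3 ∧ 1 ≤ w 4 ∧ w 3 + w 4 = w 0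

def I2 (w : Fin 6 → ℤ) : Prop :=
  w 1 = w 0 - 1 ∧ w 2 = w 0 - 1 ∧ w 4 = 0 ∧ 1 ≤ w 3 ∧ 0 ≤ w 5 ∧ w 3 + w 5 = w 0 - 1

lemma step0 {w : Fin 6 → ℤ} (h : I0 w) : I1 (P0.mulVec w) := by
  obtain ⟨h1, h2, h3, h4, h5, h6⟩ := h
  simp [I1, P0, Matrix.mulVec, dotProduct, Fin.sum_univ_six, cons_val_five'] at *
  omega

lemma step1 {w : Fin 6 → ℤ} (h : I1 w) : I2 (P1.mulVec w) := by
  obtain ⟨h1, h2, h3, h4, h5, h6⟩ := h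
  simp [I2, P1, Matrix.mulVec, dotProduct, Fin.sum_univ_six, cons_val_five'] at *
  omega

lemma step2 {w : Fin 6 → ℤ} (h : I2 w) : I0 (P2.mulVec w) := by
  obtain ⟨h1, h2, h3, h4, h5, h6⟩ := h
  simp [I0, P2, Matrix.mulVec, dotProduct, Fin.sum_univ_six, cons_val_five'] at *
  omega

lemma Pseq_eq0 {n : ℕ} (h : n % 3 = 0) : Pseq n = P0 := by
  have : (⟨n % 3, Nat.mod_lt _ (by norm_num)⟩ : Fin 3) = 0 := Fin.ext (by simp [h])
  simp [Pseq, this]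

lemma Pseq_eq1 {n : ℕ} (h : n % 3 = 1) : Pseq n = P1 := by
  have : (⟨n % 3, Nat.mod_lt _ (by norm_num)⟩ : Fin 3) = 1 := Fin.ext (by simp [h])
  simp [Pseq, this]

lemma Pseq_eq2 {n : ℕ} (h : n % 3 = 2) : Pseq n = P2 := by
  have : (⟨n % 3, Nat.mod_lt _ (by norm_num)⟩ : Fin 3) = 2 := Fin.ext (by simp [h])
  simp [Pseq, this]

/-- Along the orbit of `e₀ = (1,0,…,0)ᵗ` under `v⁽ⁱ⁺¹⁾ = P_i·v⁽ⁱ⁾`, each of the first three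
coordinates is always at least each of the last three (Lemma 7.1, key inequality). -/
theorem stmt_8 (v : ℕ → Fin 6 → ℤ)
    (hv0 : v 0 = fun i => if i = 0 then 1 else 0)
    (hv : ∀ i : ℕ, v (i + 1) = (Pseq i).mulVec (v i)) :
    ∀ (i : ℕ) (k l : Fin 6), (k : ℕ) < 3 → 3 ≤ (l : ℕ) → v i l ≤ v i k := by
  have key : ∀ i : ℕ, (i % 3 = 0 → I0 (v i)) ∧ (i % 3 = 1 → I1 (v i)) ∧
      (i % 3 = 2 → I2 (v i)) := by
    intro i
    induction i with
    | zero => refine ⟨fun _ => ?_, fun h => by omega, fun h => by omega⟩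
              simp [hv0, I0]
    | succ n ih =>
      obtain ⟨ih0, ih1, ih2⟩ := ih
      rcases (by omega : n % 3 = 0 ∨ n % 3 = 1 ∨ n % 3 = 2) with h | h | h
      · refine ⟨fun h' => by omega, fun _ => ?_, fun h' => by omega⟩
        rw [hv n, Pseq_eq0 h]; exact step0 (ih0 h)
      · refine ⟨fun h' => by omega, fun h' => by omega, fun _ => ?_⟩
        rw [hv n, Pseq_eq1 h]; exact step1 (ih1 h)
      · refine ⟨fun _ => ?_, fun h' => by omega, fun h' => by omega⟩
        rw [hv n, Pseq_eq2 h]; exact step2 (ih2 h)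
  intro i k l hk hl
  obtain ⟨k0, k1, k2⟩ := key i
  rcases (by omega : i % 3 = 0 ∨ i % 3 = 1 ∨ i % 3 = 2) with h | h | h
  · obtain ⟨h1, h2, h3, h4, h5, h6⟩ := k0 h
    fin_cases k <;> fin_cases l <;> simp_all <;> omega
  · obtain ⟨h1, h2, h3, h4, h5, h6⟩ := k1 h
    fin_cases k <;> fin_cases l <;> simp_all <;> omega
  · obtain ⟨h1, h2, h3, h4, h5, h6⟩ := k2 h
    fin_cases k <;> fin_cases l <;> simp_all <;> omega
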